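/- Fan-out and parity are conjugate by Hadamards: for every n ≥ 1, H^{⊗(n+1)} * Fₙ * H^{⊗(n+1)} = Pₙ, where Fₙ is the fan-out gate on n+1 qubits, Pₙ is the parity (Mod₂) gate on n+1 qubits, and H^{⊗(n+1)} is the (n+1)-fold Kronecker product of the Hadamard matrix H = (1/√2)·[[1,1],[1,−1]]. -/
import Mathlib


open Matrix

/-- The Hadamard gate, with rows/columns indexed by `Bool`. -/
noncomputable def Hb : Matrix Bool Bool ℂ :=
  fun b c => ((1 / Real.sqrt 2 : ℝ) : ℂ) * (if b && c then -1 else 1)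

/-- The `(n+1)`-fold Kronecker product `H^{⊗(n+1)}` of the Hadamard gate, acting
on `n+1` qubits indexed as `(x, b)` with `x : Fin n → Bool` and `b : Bool`. -/
noncomputable def HN (n : ℕ) :
    Matrix ((Fin n → Bool) × Bool) ((Fin n → Bool) × Bool) ℂ :=
  fun p q => (∏ i, Hb (p.1 i) (q.1 i)) * Hb p.2 q.2

/-- The fan-out gate `Fₙ` on `n+1` qubits: the permutation matrix sending
`|x₁,…,xₙ, b⟩` to `|x₁⊕b,…,xₙ⊕b, b⟩`. -/
def Fanout (n : ℕ) : Matrix ((Fin n → Bool) × Bool) ((Fin n → Bool) × Bool) ℂ :=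
  fun p q => if p = (fun i => xor (q.1 i) q.2, q.2) then 1 else 0

/-- The parity (`Mod₂`) gate `Pₙ` on `n+1` qubits: the permutation matrix sending
`|x₁,…,xₙ, b⟩` to `|x₁,…,xₙ, b ⊕ x₁ ⊕ ⋯ ⊕ xₙ⟩`, i.e. flipping the target iff
`x₁ + ⋯ + xₙ` is odd. -/
def ParityGate (n : ℕ) : Matrix ((Fin n → Bool) × Bool) ((Fin n → Bool) × Bool) ℂ :=
  fun p q =>
    if p = (q.1, xor q.2 (decide ((Finset.univ.filter fun i => q.1 i = true).card % 2 = 1)))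
    then 1 else 0

/-! ### Auxiliary lemmas -/

/-- The sign character `b ↦ (-1)^b`. -/
def sgn (b : Bool) : ℂ := if b then -1 else 1

lemma sgn_xor (a b : Bool) : sgn (xor a b) = sgn a * sgn b := by
  cases a <;> cases b <;> simp [sgn]

lemma Hb_eq (b c : Bool) :
    Hb b c = ((1 / Real.sqrt 2 : ℝ) : ℂ) * sgn (b && c) := by
  cases b <;> cases c <;> simp [Hb, sgn]

lemma neg_one_pow_eq_sgn (k : ℕ) : ((-1 : ℂ)) ^ k = sgn (decide (k % 2 = 1)) := by
  rcases Nat.even_or_odd k with h | h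
  · rw [h.neg_one_pow]
    have : k % 2 = 0 := Nat.even_iff.mp h
    simp [sgn, this]
  · rw [h.neg_one_pow]
    have : k % 2 = 1 := Nat.odd_iff.mp h
    simp [sgn, this]

lemma prod_sgn {n : ℕ} (f : Fin n → Bool) :
    (∏ i, sgn (f i)) = sgn (decide ((Finset.univ.filter fun i => f i = true).card % 2 = 1)) := by
  have h1 : ∀ b : Bool, sgn b = (-1 : ℂ) ^ b.toNat := by
    intro b; cases b <;> simp [sgn]
  have hsum : (∑ i, (f i).toNat) = (Finset.univ.filter fun i => f i = true).card := by
    rw [Finset.card_filter]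
    exact Finset.sum_congr rfl fun i _ => by cases f i <;> simp
  calc (∏ i, sgn (f i)) = ∏ i, (-1 : ℂ) ^ (f i).toNat := by simp only [h1]
    _ = (-1 : ℂ) ^ (∑ i, (f i).toNat) := Finset.prod_pow_eq_pow_sum _ _ _
    _ = _ := by rw [hsum, neg_one_pow_eq_sgn]

lemma HbHb (b c : Bool) : (∑ r, Hb b r * Hb r c) = if b = c then 1 else 0 := by
  have hss : (((Real.sqrt 2 : ℝ) : ℂ))⁻¹ * (((Real.sqrt 2 : ℝ) : ℂ))⁻¹ = 1/2 := by
    have h2 : ((Real.sqrt 2 : ℝ) : ℂ) * ((Real.sqrt 2 : ℝ) : ℂ) = 2 := by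
      rw [← Complex.ofReal_mul, Real.mul_self_sqrt (by norm_num)]; norm_num
    have hne : ((Real.sqrt 2 : ℝ) : ℂ) ≠ 0 := by
      simp [Real.sqrt_ne_zero'.2 (by norm_num : (0:ℝ) < 2)]
    field_simp
    linear_combination -h2
  cases b <;> cases c <;> simp only [Fintype.sum_bool, Hb, Bool.and_false, Bool.and_true,
    Bool.false_and, Bool.true_and, if_true, if_false, ite_true, ite_false] <;>
    push_cast <;> norm_num <;> linear_combination 2 * hss

lemma HN_mul_HN (n : ℕ) : HN n * HN n = 1 := by
  ext p q
  rw [Matrix.mul_apply, Fintype.sum_prod_type]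
  rw [Finset.sum_comm]
  have step : ∀ b : Bool,
      (∑ a : Fin n → Bool, HN n p (a, b) * HN n (a, b) q)
        = (∏ i, ∑ x : Bool, Hb (p.1 i) x * Hb x (q.1 i)) * (Hb p.2 b * Hb b q.2) := by
    intro b
    rw [Finset.prod_univ_sum, Fintype.piFinset_univ, Finset.sum_mul]
    exact Finset.sum_congr rfl fun a _ => by
      simp only [HN, Finset.prod_mul_distrib]; ring
  simp only [step]
  rw [← Finset.mul_sum]
  simp only [HbHb]
  rw [Finset.prod_boole]
  rcases eq_or_ne p q with rfl | hpq
  · simp [Matrix.one_apply]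
  · rw [Matrix.one_apply_ne hpq]
    rcases (Prod.ext_iff.not.mp hpq) with h
    push_neg at h
    by_cases h1 : p.1 = q.1
    · have h2 : p.2 ≠ q.2 := fun h2 => hpq (Prod.ext h1 h2)
      simp [funext_iff.symm, h1, h2]
    · simp [funext_iff.symm, h1]

lemma key_scalar {n : ℕ} (p q : (Fin n → Bool) × Bool) :
    (∏ i, Hb (p.1 i) (xor (q.1 i) q.2)) * Hb p.2 q.2
      = (∏ i, Hb (p.1 i) (q.1 i)) *
        Hb (xor p.2 (decide ((Finset.univ.filter fun i => p.1 i = true).card % 2 = 1))) q.2 := by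
  simp only [Hb_eq, Bool.and_xor_distrib_left, Bool.and_xor_distrib_right, sgn_xor,
    Finset.prod_mul_distrib]
  have h : (∏ i, sgn (p.1 i && q.2)) = sgn ((decide ((Finset.univ.filter
      fun i => p.1 i = true).card % 2 = 1)) && q.2) := by
    cases hq : q.2
    · simp [sgn]
    · simpa using prod_sgn p.1
  rw [h]
  ring

lemma HN_mul_Fanout (n : ℕ) : HN n * Fanout n = ParityGate n * HN n := by
  ext p q
  have hL : (HN n * Fanout n) p q = HN n p (fun i => xor (q.1 i) q.2, q.2) := by
    rw [Matrix.mul_apply]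
    simp [Fanout, mul_ite, mul_one, mul_zero, eq_comm]
  have hR : (ParityGate n * HN n) p q
      = HN n (p.1, xor p.2 (decide ((Finset.univ.filter
          fun i => p.1 i = true).card % 2 = 1))) q := by
    rw [Matrix.mul_apply]
    have hiff : ∀ r : (Fin n → Bool) × Bool,
        (p = (r.1, xor r.2 (decide ((Finset.univ.filter fun i => r.1 i = true).card % 2 = 1))))
        ↔ (r = (p.1, xor p.2 (decide ((Finset.univ.filter
            fun i => p.1 i = true).card % 2 = 1)))) := by
      rintro ⟨r1, r2⟩
      constructor
      · rintro rfl
        simp [Prod.ext_iff]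
      · intro h
        rw [Prod.ext_iff] at h
        obtain ⟨h1, h2⟩ := h
        simp only at h1 h2
        subst h1
        subst h2
        simp [Prod.ext_iff]
    simp only [ParityGate, hiff]
    simp [Finset.sum_ite_eq]
  rw [hL, hR]
  exact key_scalar p q

/-- Fan-out and parity are conjugate by Hadamards:
`H^{⊗(n+1)} * Fₙ * H^{⊗(n+1)} = Pₙ` for every `n ≥ 1`. -/
theorem fanout_conj_hadamard_eq_parity (n : ℕ) (hn : 1 ≤ n) :
    HN n * Fanout n * HN n = ParityGate n := by
  rw [HN_mul_Fanout, Matrix.mul_assoc, HN_mul_HN, Matrix.mul_one]
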